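/- Let a_1 < ... < a_n be positive integers with a_i ≤ 2i - 1, and p ≥ 0 an integer. Then det( binom(p + i - 1, a_i - j) )_{1≤i,j≤n} is strictly positive; it counts column-strict and row-strict fillings of the Young diagram Y(a) with entries at most p + n - 1. -/

import Mathlib

open Finset

/-- number of elements of `T` that are `< t` -/
def cnt (T : Finset ℕ) (t : ℕ) : ℕ := (T.filter (· < t)).card

lemma cnt_le_card (T : Finset ℕ) (t : ℕ) : cnt T t ≤ T.card := Finset.card_filter_le _ _

lemma cnt_mono (T : Finset ℕ) {s t : ℕ} (h : s ≤ t) : cnt T s ≤ cnt T t := by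
  apply Finset.card_le_card
  intro x hx
  simp only [Finset.mem_filter] at hx ⊢
  exact ⟨hx.1, by omega⟩

lemma cnt_succ_or (T : Finset ℕ) (t : ℕ) :
    cnt T (t+1) = cnt T t ∨ cnt T (t+1) = cnt T t + 1 := by
  have h1 : cnt T t ≤ cnt T (t+1) := cnt_mono T (by omega)
  have h2 : cnt T (t+1) ≤ cnt T t + 1 := by
    have hsub : T.filter (· < t + 1) ⊆ T.filter (· < t) ∪ {t} := by
      intro x hx
      simp only [Finset.mem_filter, Finset.mem_union, Finset.mem_singleton] at hx ⊢
      by_cases hxt : x = t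
      · right; exact hxt
      · left; exact ⟨hx.1, by omega⟩
    calc cnt T (t+1) ≤ (T.filter (· < t) ∪ {t}).card := Finset.card_le_card hsub
      _ ≤ (T.filter (· < t)).card + ({t} : Finset ℕ).card :=
          Finset.card_union_le _ _
      _ = cnt T t + 1 := by rw [Finset.card_singleton]; rfl
  omega

lemma cnt_eq_card (T : Finset ℕ) {L t : ℕ} (hT : T ⊆ Finset.range L) (ht : L ≤ t) :
    cnt T t = T.card := by
  unfold cnt
  congr 1
  apply Finset.filter_true_of_mem
  intro x hx
  have := hT hx
  simp only [Finset.mem_range] at this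
  omega

lemma card_le_cnt_add (T : Finset ℕ) {L : ℕ} (hT : T ⊆ Finset.range L) (t : ℕ) :
    T.card ≤ cnt T t + (L - t) := by
  have hsub : T.filter (fun s => ¬ s < t) ⊆ Finset.Ico t L := by
    intro x hx
    simp only [Finset.mem_filter] at hx
    have := hT hx.1
    simp only [Finset.mem_range] at this
    simp only [Finset.mem_Ico]
    omega
  have h2 := Finset.card_le_card hsub
  rw [Nat.card_Ico] at h2
  have h3 : cnt T t + (T.filter (fun s => ¬ s < t)).card = T.card := by
    simpa [cnt] using Finset.card_filter_add_card_filter_not (s := T) (p := (· < t))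
  omega

/-- the key sorted-list counting lemma -/
lemma sorted_count_iff (t : ℕ) : ∀ {l : List ℕ}, l.Pairwise (· < ·) →
    ∀ {y : ℕ} (hy : y < l.length), (l[y] < t ↔ y + 1 ≤ l.countP (· < t)) := by
  intro l
  induction l with
  | nil => intro _ y hy; simp at hy
  | cons x xs ih =>
    intro hs y hy
    rw [List.pairwise_cons] at hs
    obtain ⟨hx, hxs⟩ := hs
    rw [List.countP_cons]
    by_cases hxt : x < t
    · match y with
      | 0 =>
        simp only [List.getElem_cons_zero]
        simp [hxt]
      | y + 1 =>
        have hy' : y < xs.length := by simpa using hy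
        simp only [List.getElem_cons_succ, hxt]
        rw [ih hxs hy']
        simp
    · have hzero : xs.countP (· < t) = 0 := by
        rw [List.countP_eq_zero]
        intro b hb
        have := hx b hb
        simp only [decide_eq_true_eq]
        omega
      match y with
      | 0 =>
        simp only [List.getElem_cons_zero]
        simp [hxt, hzero]
      | y + 1 =>
        have hy' : y < xs.length := by simpa using hy
        simp only [List.getElem_cons_succ]
        have hmem : xs[y] ∈ xs := List.getElem_mem hy'
        have := hx _ hmem
        simp [hxt, hzero]
        omega

lemma cnt_eq_countP (T : Finset ℕ) (t : ℕ) :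
    cnt T t = (T.sort (· ≤ ·)).countP (· < t) := by
  have h1 : cnt T t = Multiset.card (Multiset.filter (fun s => s < t) T.val) := by
    rw [cnt, Finset.card_def, Finset.filter_val]
  rw [h1, ← Finset.sort_eq T (· ≤ ·)]
  rw [Multiset.filter_coe, Multiset.coe_card, List.countP_eq_length_filter]

lemma sort_sorted_lt' (T : Finset ℕ) : (T.sort (· ≤ ·)).Pairwise (· < ·) :=
  List.sortedLT_iff_pairwise.mp T.sortedLT_sort

lemma cnt_lt_iff (T : Finset ℕ) {y : ℕ} (hy : y < (T.sort (· ≤ ·)).length) (t : ℕ) :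
    ((T.sort (· ≤ ·))[y] < t ↔ y + 1 ≤ cnt T t) := by
  rw [cnt_eq_countP]
  exact sorted_count_iff t (List.sortedLT_iff_pairwise.mp T.sortedLT_sort) hy

/-! ### glue: swapping heads of two paths -/

def glue (A B : Finset ℕ) (t : ℕ) : Finset ℕ :=
  A.filter (· < t) ∪ B.filter (fun s => ¬ s < t)

lemma glue_glue (A B : Finset ℕ) (t : ℕ) : glue (glue A B t) (glue B A t) t = A := by
  unfold glue
  rw [Finset.filter_union, Finset.filter_union, Finset.filter_filter, Finset.filter_filter,
    Finset.filter_filter, Finset.filter_filter]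
  have e1 : (A.filter fun a => a < t ∧ a < t) = A.filter (· < t) := by
    apply Finset.filter_congr; intro x _; simp
  have e2 : (B.filter fun a => ¬ a < t ∧ a < t) = ∅ := by
    apply Finset.filter_false_of_mem; intro x _; omega
  have e3 : (B.filter fun a => a < t ∧ ¬ a < t) = ∅ := by
    apply Finset.filter_false_of_mem; intro x _; omega
  have e4 : (A.filter fun a => ¬ a < t ∧ ¬ a < t) = A.filter (fun s => ¬ s < t) := by
    apply Finset.filter_congr; intro x _; simp
  rw [e1, e2, e3, e4, Finset.union_empty, Finset.empty_union,
    Finset.filter_union_filter_not_eq]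

lemma cnt_glue_of_le (A B : Finset ℕ) {t t' : ℕ} (h : t' ≤ t) :
    cnt (glue A B t) t' = cnt A t' := by
  unfold glue cnt
  rw [Finset.filter_union, Finset.filter_filter, Finset.filter_filter]
  have e2 : (B.filter fun a => ¬ a < t ∧ a < t') = ∅ := by
    apply Finset.filter_false_of_mem; intro x _; omega
  have e1 : (A.filter fun a => a < t ∧ a < t') = A.filter (· < t') := by
    apply Finset.filter_congr; intro x _; simp; omega
  rw [e1, e2, Finset.union_empty]

lemma card_glue (A B : Finset ℕ) (t : ℕ) :
    (glue A B t).card + cnt B t = cnt A t + B.card := by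
  unfold glue
  rw [Finset.card_union_of_disjoint]
  · have h3 : (B.filter (· < t)).card + (B.filter (fun s => ¬ s < t)).card = B.card := by
      have := Finset.card_filter_add_card_filter_not (s := B) (p := (· < t))
      convert this using 3
    unfold cnt
    omega
  · apply Finset.disjoint_left.mpr
    intro x hx hx'
    simp only [Finset.mem_filter] at hx hx'
    omega

lemma glue_subset_range (A B : Finset ℕ) {t L : ℕ} (hB : B ⊆ Finset.range L)
    (ht : t ≤ L) : glue A B t ⊆ Finset.range L := by
  unfold glue
  intro x hx
  simp only [Finset.mem_union, Finset.mem_filter, Finset.mem_range] at hx ⊢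
  rcases hx with h | h
  · omega
  · have := hB h.1; simp only [Finset.mem_range] at this; omega

/-! ### discrete intermediate value arguments -/

lemma steps_ivt (f g : ℕ → ℕ)
    (hf : ∀ t, f (t+1) = f t ∨ f (t+1) = f t + 1)
    (hg : ∀ t, g (t+1) = g t ∨ g (t+1) = g t + 1) :
    ∀ N, g 0 ≤ f 0 → f N ≤ g N → ∃ t, t ≤ N ∧ f t = g t := by
  intro N
  induction N with
  | zero => intro h1 h2; exact ⟨0, le_refl _, by omega⟩
  | succ N ih =>
    intro h1 h2
    by_cases hc : f N ≤ g N
    · obtain ⟨t, ht, he⟩ := ih h1 hc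
      exact ⟨t, by omega, he⟩
    · refine ⟨N+1, le_refl _, ?_⟩
      rcases hf N with h | h <;> rcases hg N with h' | h' <;> omega

lemma steps_no_cross (f g : ℕ → ℕ)
    (hf : ∀ t, f (t+1) = f t ∨ f (t+1) = f t + 1)
    (hg : ∀ t, g (t+1) = g t ∨ g (t+1) = g t + 1)
    (N : ℕ) (h0 : f 0 < g 0) (hne : ∀ t, t ≤ N → f t ≠ g t) :
    ∀ t, t ≤ N → f t < g t := by
  intro t
  induction t with
  | zero => intro _; exact h0
  | succ t ih =>
    intro ht
    have h1 : f t < g t := ih (by omega)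
    have h2 := hne (t+1) ht
    rcases hf t with h | h <;> rcases hg t with h' | h' <;> omega

/-! ### sorted lists of finsets and images -/

lemma image_getD (T : Finset ℕ) {m : ℕ} (hm : m = T.card) :
    (Finset.range m).image (fun y => (T.sort (· ≤ ·)).getD y 0) = T := by
  ext t
  simp only [Finset.mem_image, Finset.mem_range]
  constructor
  · rintro ⟨y, hy, rfl⟩
    have hy' : y < (T.sort (· ≤ ·)).length := by
      rw [Finset.length_sort]; omega
    rw [List.getD_eq_getElem _ _ hy']
    have := List.getElem_mem hy'
    exact (Finset.mem_sort (· ≤ ·)).mp this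
  · intro ht
    have : t ∈ T.sort (· ≤ ·) := (Finset.mem_sort (· ≤ ·)).mpr ht
    obtain ⟨y, hy, he⟩ := List.mem_iff_getElem.mp this
    refine ⟨y, by rw [Finset.length_sort] at hy; omega, ?_⟩
    rw [List.getD_eq_getElem _ _ hy, he]

lemma sort_image {m : ℕ} {g : ℕ → ℕ} (hg : ∀ {y z : ℕ}, y < z → z < m → g y < g z) :
    ((Finset.range m).image g).sort (· ≤ ·) = (List.range m).map g := by
  have hinj : ∀ x ∈ (Finset.range m).val, ∀ y ∈ (Finset.range m).val, g x = g y → x = y := by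
    intro x hx y hy he
    simp only [Finset.range_val, Multiset.mem_range] at hx hy
    rcases Nat.lt_trichotomy x y with h | h | h
    · have := hg h hy; omega
    · exact h
    · have := hg h hx; omega
  refine (fun h1 h2 h3 => List.Perm.eq_of_pairwise' (r := (· ≤ ·)) h2 h3 h1) ?_ ?_ ?_
  · rw [← Multiset.coe_eq_coe, Finset.sort_eq]
    rw [Finset.image_val]
    rw [Multiset.dedup_eq_self.mpr (Multiset.Nodup.map_on hinj (Finset.range m).nodup)]
    rw [Finset.range_val]
    rw [show Multiset.range m = ↑(List.range m) from rfl, Multiset.map_coe]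
  · exact Finset.pairwise_sort _ _
  · rw [List.pairwise_iff_getElem]
    intro i j hi hj hij
    simp only [List.getElem_map, List.getElem_range]
    have hj' : j < m := by simpa using hj
    exact le_of_lt (hg hij hj')

/-! ### path families -/

section Families

variable (n p : ℕ) (a : Fin n → ℕ)

/-- height of path `i` at diagonal `t` -/
def Ht (σ : Equiv.Perm (Fin n)) (F : Fin n → Finset ℕ) (i : Fin n) (t : ℕ) : ℕ :=
  (σ i : ℕ) + 1 + cnt (F i) t

/-- two paths meet at diagonal `t` -/
def Pt (σ : Equiv.Perm (Fin n)) (F : Fin n → Finset ℕ) (t : ℕ) : Prop :=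
  ∃ q : Fin n × Fin n, q.1 ≠ q.2 ∧ t ≤ p + ↑q.1 ∧ t ≤ p + ↑q.2 ∧
    Ht n σ F q.1 t = Ht n σ F q.2 t

instance (σ : Equiv.Perm (Fin n)) (F : Fin n → Finset ℕ) (t : ℕ) :
    Decidable (Pt n p σ F t) := by unfold Pt; infer_instance

/-- some two paths meet -/
def BadP (σ : Equiv.Perm (Fin n)) (F : Fin n → Finset ℕ) : Prop :=
  ∃ t : Fin (p + n + 1), Pt n p σ F ↑t

instance (σ : Equiv.Perm (Fin n)) (F : Fin n → Finset ℕ) :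
    Decidable (BadP n p σ F) := by unfold BadP; infer_instance

lemma badP_iff {σ : Equiv.Perm (Fin n)} {F : Fin n → Finset ℕ} :
    BadP n p σ F ↔ ∃ t, Pt n p σ F t := by
  constructor
  · rintro ⟨t, ht⟩; exact ⟨↑t, ht⟩
  · rintro ⟨t, ht⟩
    obtain ⟨q, hq, h1, h2, h3⟩ := ht
    have : (q.1 : ℕ) < n := q.1.isLt
    exact ⟨⟨t, by omega⟩, ⟨q, hq, h1, h2, h3⟩⟩

/-- the finset of path families for permutation `σ` -/
def Fams (σ : Equiv.Perm (Fin n)) : Finset (Fin n → Finset ℕ) :=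
  Fintype.piFinset fun i =>
    ((Finset.range (p + ↑i)).powerset).filter (fun T => T.card + (↑(σ i) + 1) = a i)

lemma mem_Fams {σ : Equiv.Perm (Fin n)} {F : Fin n → Finset ℕ} :
    F ∈ Fams n p a σ ↔
      ∀ i, F i ⊆ Finset.range (p + ↑i) ∧ (F i).card + (↑(σ i) + 1) = a i := by
  simp [Fams, Fintype.mem_piFinset]

lemma card_filter_powerset (L s e : ℕ) :
    (((Finset.range L).powerset).filter (fun T => T.card + s = e)).card =
      if s ≤ e then L.choose (e - s) else 0 := by
  by_cases h : s ≤ e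
  · rw [if_pos h]
    have : ((Finset.range L).powerset).filter (fun T => T.card + s = e) =
        Finset.powersetCard (e - s) (Finset.range L) := by
      rw [Finset.powersetCard_eq_filter]
      apply Finset.filter_congr
      intro T _
      constructor
      · intro hT; omega
      · intro hT; omega
    rw [this, Finset.card_powersetCard, Finset.card_range]
  · rw [if_neg h]
    rw [Finset.card_eq_zero]
    apply Finset.filter_false_of_mem
    intro T _
    omega

lemma det_eq_sum_card :
    Matrix.det (Matrix.of fun i j : Fin n =>
        if (j : ℕ) + 1 ≤ a i then ((p + (i : ℕ)).choose (a i - ((j : ℕ) + 1)) : ℤ)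
        else 0) =
      ∑ σ : Equiv.Perm (Fin n), (Equiv.Perm.sign σ : ℤ) * ((Fams n p a σ).card : ℤ) := by
  rw [← Matrix.det_transpose, Matrix.det_apply]
  apply Finset.sum_congr rfl
  intro σ _
  have hcard : ((Fams n p a σ).card : ℤ) =
      ∏ i : Fin n, (if (↑(σ i) + 1 ≤ a i) then ((p + ↑i).choose (a i - (↑(σ i) + 1)) : ℤ)
        else 0) := by
    rw [Fams, Fintype.card_piFinset]
    push_cast
    apply Finset.prod_congr rfl
    intro i _
    rw [card_filter_powerset]
    split <;> simp
  rw [hcard, Units.smul_def]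
  congr 1


/-! ### the sign-reversing involution -/

lemma pt_exists {σ : Equiv.Perm (Fin n)} {F : Fin n → Finset ℕ} (hb : BadP n p σ F) :
    ∃ t, Pt n p σ F t := (badP_iff n p).mp hb

/-- the first diagonal where two paths meet -/
def tmin {σ : Equiv.Perm (Fin n)} {F : Fin n → Finset ℕ} (hb : BadP n p σ F) : ℕ :=
  Nat.find (pt_exists n p hb)

lemma tmin_spec {σ : Equiv.Perm (Fin n)} {F : Fin n → Finset ℕ} (hb : BadP n p σ F) :
    Pt n p σ F (tmin n p hb) := Nat.find_spec (pt_exists n p hb)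

lemma tmin_min {σ : Equiv.Perm (Fin n)} {F : Fin n → Finset ℕ} (hb : BadP n p σ F)
    {t : ℕ} (h : t < tmin n p hb) : ¬ Pt n p σ F t := Nat.find_min (pt_exists n p hb) h

def meetSet (σ : Equiv.Perm (Fin n)) (F : Fin n → Finset ℕ) (t : ℕ) : Finset (Fin n) :=
  Finset.univ.filter (fun i => ∃ j, j ≠ i ∧ t ≤ p + ↑i ∧ t ≤ p + ↑j ∧
    Ht n σ F i t = Ht n σ F j t)

def jSet (σ : Equiv.Perm (Fin n)) (F : Fin n → Finset ℕ) (t : ℕ) (i : Fin n) :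
    Finset (Fin n) :=
  Finset.univ.filter (fun j => j ≠ i ∧ t ≤ p + ↑j ∧ Ht n σ F i t = Ht n σ F j t)

lemma meetSet_nonempty {σ : Equiv.Perm (Fin n)} {F : Fin n → Finset ℕ}
    (hb : BadP n p σ F) : (meetSet n p σ F (tmin n p hb)).Nonempty := by
  obtain ⟨q, hne, h1, h2, h3⟩ := tmin_spec n p hb
  refine ⟨q.1, ?_⟩
  simp only [meetSet, Finset.mem_filter, Finset.mem_univ, true_and]
  exact ⟨q.2, Ne.symm hne, h1, h2, h3⟩

def i0 {σ : Equiv.Perm (Fin n)} {F : Fin n → Finset ℕ} (hb : BadP n p σ F) : Fin n :=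
  (meetSet n p σ F (tmin n p hb)).min' (meetSet_nonempty n p hb)

lemma i0_mem {σ : Equiv.Perm (Fin n)} {F : Fin n → Finset ℕ} (hb : BadP n p σ F) :
    i0 n p hb ∈ meetSet n p σ F (tmin n p hb) :=
  Finset.min'_mem _ _

lemma jSet_nonempty {σ : Equiv.Perm (Fin n)} {F : Fin n → Finset ℕ} (hb : BadP n p σ F) :
    (jSet n p σ F (tmin n p hb) (i0 n p hb)).Nonempty := by
  have := i0_mem n p hb
  simp only [meetSet, Finset.mem_filter, Finset.mem_univ, true_and] at this
  obtain ⟨j, hj1, hj2, hj3, hj4⟩ := this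
  refine ⟨j, ?_⟩
  simp only [jSet, Finset.mem_filter, Finset.mem_univ, true_and]
  exact ⟨hj1, hj3, hj4⟩

def i1 {σ : Equiv.Perm (Fin n)} {F : Fin n → Finset ℕ} (hb : BadP n p σ F) : Fin n :=
  (jSet n p σ F (tmin n p hb) (i0 n p hb)).min' (jSet_nonempty n p hb)

lemma i1_mem {σ : Equiv.Perm (Fin n)} {F : Fin n → Finset ℕ} (hb : BadP n p σ F) :
    i1 n p hb ∈ jSet n p σ F (tmin n p hb) (i0 n p hb) :=
  Finset.min'_mem _ _

lemma i1_ne {σ : Equiv.Perm (Fin n)} {F : Fin n → Finset ℕ} (hb : BadP n p σ F) :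
    i1 n p hb ≠ i0 n p hb := by
  have := i1_mem n p hb
  simp only [jSet, Finset.mem_filter, Finset.mem_univ, true_and] at this
  exact this.1

lemma ht_eq_i0_i1 {σ : Equiv.Perm (Fin n)} {F : Fin n → Finset ℕ} (hb : BadP n p σ F) :
    Ht n σ F (i0 n p hb) (tmin n p hb) = Ht n σ F (i1 n p hb) (tmin n p hb) := by
  have := i1_mem n p hb
  simp only [jSet, Finset.mem_filter, Finset.mem_univ, true_and] at this
  exact this.2.2

lemma tmin_le_i0 {σ : Equiv.Perm (Fin n)} {F : Fin n → Finset ℕ} (hb : BadP n p σ F) :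
    tmin n p hb ≤ p + ↑(i0 n p hb) := by
  have := i0_mem n p hb
  simp only [meetSet, Finset.mem_filter, Finset.mem_univ, true_and] at this
  obtain ⟨j, _, h, _, _⟩ := this
  exact h

lemma tmin_le_i1 {σ : Equiv.Perm (Fin n)} {F : Fin n → Finset ℕ} (hb : BadP n p σ F) :
    tmin n p hb ≤ p + ↑(i1 n p hb) := by
  have := i1_mem n p hb
  simp only [jSet, Finset.mem_filter, Finset.mem_univ, true_and] at this
  exact this.2.1

/-- the involution: swap the heads of the two first-meeting paths -/
def gswap (σ : Equiv.Perm (Fin n)) (F : Fin n → Finset ℕ) (hb : BadP n p σ F) :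
    (Equiv.Perm (Fin n)) × (Fin n → Finset ℕ) :=
  (σ * Equiv.swap (i0 n p hb) (i1 n p hb),
   fun i => if i = i0 n p hb then glue (F (i1 n p hb)) (F (i0 n p hb)) (tmin n p hb)
            else if i = i1 n p hb then glue (F (i0 n p hb)) (F (i1 n p hb)) (tmin n p hb)
            else F i)

lemma ht_gswap {σ : Equiv.Perm (Fin n)} {F : Fin n → Finset ℕ} (hb : BadP n p σ F)
    (w : Fin n) {t : ℕ} (ht : t ≤ tmin n p hb) :
    Ht n (gswap n p σ F hb).1 (gswap n p σ F hb).2 w t =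
      Ht n σ F (Equiv.swap (i0 n p hb) (i1 n p hb) w) t := by
  unfold Ht gswap
  simp only [Equiv.Perm.coe_mul, Function.comp_apply]
  by_cases h0 : w = i0 n p hb
  · subst h0
    rw [Equiv.swap_apply_left, if_pos rfl, cnt_glue_of_le _ _ ht]
  · by_cases h1 : w = i1 n p hb
    · subst h1
      rw [Equiv.swap_apply_right, if_neg h0, if_pos rfl, cnt_glue_of_le _ _ ht]
    · rw [Equiv.swap_apply_of_ne_of_ne h0 h1, if_neg h0, if_neg h1]

lemma ht_gswap_tmin {σ : Equiv.Perm (Fin n)} {F : Fin n → Finset ℕ} (hb : BadP n p σ F)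
    (w : Fin n) :
    Ht n (gswap n p σ F hb).1 (gswap n p σ F hb).2 w (tmin n p hb) =
      Ht n σ F w (tmin n p hb) := by
  rw [ht_gswap n p hb w (le_refl _)]
  by_cases h0 : w = i0 n p hb
  · subst h0; rw [Equiv.swap_apply_left]; exact (ht_eq_i0_i1 n p hb).symm
  · by_cases h1 : w = i1 n p hb
    · subst h1; rw [Equiv.swap_apply_right]; exact ht_eq_i0_i1 n p hb
    · rw [Equiv.swap_apply_of_ne_of_ne h0 h1]

lemma gswap_mem_Fams {σ : Equiv.Perm (Fin n)} {F : Fin n → Finset ℕ}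
    (hF : F ∈ Fams n p a σ) (hb : BadP n p σ F) :
    (gswap n p σ F hb).2 ∈ Fams n p a (gswap n p σ F hb).1 := by
  rw [mem_Fams] at hF ⊢
  intro i
  have hhe := ht_eq_i0_i1 n p hb
  unfold Ht at hhe
  have hc0 := (hF (i0 n p hb)).2
  have hc1 := (hF (i1 n p hb)).2
  unfold gswap
  simp only [Equiv.Perm.coe_mul, Function.comp_apply]
  by_cases h0 : i = i0 n p hb
  · subst h0
    rw [if_pos rfl, Equiv.swap_apply_left]
    constructor
    · exact glue_subset_range _ _ (hF (i0 n p hb)).1 (tmin_le_i0 n p hb)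
    · have hcg := card_glue (F (i1 n p hb)) (F (i0 n p hb)) (tmin n p hb)
      omega
  · by_cases h1 : i = i1 n p hb
    · subst h1
      rw [if_neg h0, if_pos rfl, Equiv.swap_apply_right]
      constructor
      · exact glue_subset_range _ _ (hF (i1 n p hb)).1 (tmin_le_i1 n p hb)
      · have hcg := card_glue (F (i0 n p hb)) (F (i1 n p hb)) (tmin n p hb)
        omega
    · rw [if_neg h0, if_neg h1, Equiv.swap_apply_of_ne_of_ne h0 h1]
      exact hF i

lemma pt_gswap_tmin {σ : Equiv.Perm (Fin n)} {F : Fin n → Finset ℕ} (hb : BadP n p σ F) :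
    Pt n p (gswap n p σ F hb).1 (gswap n p σ F hb).2 (tmin n p hb) := by
  refine ⟨(i0 n p hb, i1 n p hb), (i1_ne n p hb).symm, tmin_le_i0 n p hb,
    tmin_le_i1 n p hb, ?_⟩
  rw [ht_gswap_tmin, ht_gswap_tmin]
  exact ht_eq_i0_i1 n p hb

lemma gswap_bad {σ : Equiv.Perm (Fin n)} {F : Fin n → Finset ℕ} (hb : BadP n p σ F) :
    BadP n p (gswap n p σ F hb).1 (gswap n p σ F hb).2 :=
  (badP_iff n p).mpr ⟨tmin n p hb, pt_gswap_tmin n p hb⟩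

lemma pt_gswap_lt {σ : Equiv.Perm (Fin n)} {F : Fin n → Finset ℕ} (hb : BadP n p σ F)
    {t : ℕ} (ht : t < tmin n p hb) :
    ¬ Pt n p (gswap n p σ F hb).1 (gswap n p σ F hb).2 t := by
  rintro ⟨q, hne, h1, h2, h3⟩
  apply tmin_min n p hb ht
  have hbound : ∀ w : Fin n, t ≤ p + ↑w →
      t ≤ p + ↑(Equiv.swap (i0 n p hb) (i1 n p hb) w) := by
    intro w hw
    by_cases h0 : w = i0 n p hb
    · subst h0; rw [Equiv.swap_apply_left]
      have := tmin_le_i1 n p hb; omega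
    · by_cases hh1 : w = i1 n p hb
      · subst hh1; rw [Equiv.swap_apply_right]
        have := tmin_le_i0 n p hb; omega
      · rw [Equiv.swap_apply_of_ne_of_ne h0 hh1]; exact hw
  refine ⟨(Equiv.swap (i0 n p hb) (i1 n p hb) q.1,
           Equiv.swap (i0 n p hb) (i1 n p hb) q.2), ?_, hbound q.1 h1, hbound q.2 h2, ?_⟩
  · simp only [ne_eq, EmbeddingLike.apply_eq_iff_eq]; exact hne
  · rw [← ht_gswap n p hb q.1 (le_of_lt ht), ← ht_gswap n p hb q.2 (le_of_lt ht)]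
    exact h3

lemma tmin_gswap {σ : Equiv.Perm (Fin n)} {F : Fin n → Finset ℕ} (hb : BadP n p σ F)
    (hb' : BadP n p (gswap n p σ F hb).1 (gswap n p σ F hb).2) :
    tmin n p hb' = tmin n p hb := by
  have h1 : tmin n p hb' ≤ tmin n p hb := Nat.find_le (pt_gswap_tmin n p hb)
  rcases Nat.lt_or_ge (tmin n p hb') (tmin n p hb) with h | h
  · exact absurd (tmin_spec n p hb') (pt_gswap_lt n p hb h)
  · omega

lemma meetSet_gswap {σ : Equiv.Perm (Fin n)} {F : Fin n → Finset ℕ} (hb : BadP n p σ F) :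
    meetSet n p (gswap n p σ F hb).1 (gswap n p σ F hb).2 (tmin n p hb) =
      meetSet n p σ F (tmin n p hb) := by
  unfold meetSet
  apply Finset.filter_congr
  intro i _
  constructor
  · rintro ⟨j, hj1, hj2, hj3, hj4⟩
    exact ⟨j, hj1, hj2, hj3, by rwa [ht_gswap_tmin, ht_gswap_tmin] at hj4⟩
  · rintro ⟨j, hj1, hj2, hj3, hj4⟩
    exact ⟨j, hj1, hj2, hj3, by rwa [ht_gswap_tmin, ht_gswap_tmin]⟩

lemma i0_gswap {σ : Equiv.Perm (Fin n)} {F : Fin n → Finset ℕ} (hb : BadP n p σ F)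
    (hb' : BadP n p (gswap n p σ F hb).1 (gswap n p σ F hb).2) :
    i0 n p hb' = i0 n p hb := by
  unfold i0
  have h1 : tmin n p hb' = tmin n p hb := tmin_gswap n p hb hb'
  have h2 : meetSet n p (gswap n p σ F hb).1 (gswap n p σ F hb).2 (tmin n p hb') =
      meetSet n p σ F (tmin n p hb) := by rw [h1]; exact meetSet_gswap n p hb
  congr 1

lemma jSet_gswap {σ : Equiv.Perm (Fin n)} {F : Fin n → Finset ℕ} (hb : BadP n p σ F)
    (i : Fin n) :
    jSet n p (gswap n p σ F hb).1 (gswap n p σ F hb).2 (tmin n p hb) i =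
      jSet n p σ F (tmin n p hb) i := by
  unfold jSet
  apply Finset.filter_congr
  intro j _
  rw [ht_gswap_tmin, ht_gswap_tmin]

lemma i1_gswap {σ : Equiv.Perm (Fin n)} {F : Fin n → Finset ℕ} (hb : BadP n p σ F)
    (hb' : BadP n p (gswap n p σ F hb).1 (gswap n p σ F hb).2) :
    i1 n p hb' = i1 n p hb := by
  unfold i1
  have h1 : tmin n p hb' = tmin n p hb := tmin_gswap n p hb hb'
  have h0 : i0 n p hb' = i0 n p hb := i0_gswap n p hb hb'
  have h2 : jSet n p (gswap n p σ F hb).1 (gswap n p σ F hb).2 (tmin n p hb')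
      (i0 n p hb') = jSet n p σ F (tmin n p hb) (i0 n p hb) := by
    rw [h1, h0]; exact jSet_gswap n p hb _
  congr 1

lemma gswap_gswap {σ : Equiv.Perm (Fin n)} {F : Fin n → Finset ℕ} (hb : BadP n p σ F)
    (hb' : BadP n p (gswap n p σ F hb).1 (gswap n p σ F hb).2) :
    gswap n p (gswap n p σ F hb).1 (gswap n p σ F hb).2 hb' = (σ, F) := by
  have h1 : tmin n p hb' = tmin n p hb := tmin_gswap n p hb hb'
  have h0 : i0 n p hb' = i0 n p hb := i0_gswap n p hb hb'
  have hh1 : i1 n p hb' = i1 n p hb := i1_gswap n p hb hb'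
  have hne := i1_ne n p hb
  rw [gswap]
  rw [h1, h0, hh1]
  refine Prod.ext ?_ ?_
  · show (gswap n p σ F hb).1 * Equiv.swap (i0 n p hb) (i1 n p hb) = σ
    unfold gswap
    rw [mul_assoc, Equiv.swap_mul_self, mul_one]
  · show (fun i => if i = i0 n p hb
        then glue ((gswap n p σ F hb).2 (i1 n p hb)) ((gswap n p σ F hb).2 (i0 n p hb))
          (tmin n p hb)
        else if i = i1 n p hb
        then glue ((gswap n p σ F hb).2 (i0 n p hb)) ((gswap n p σ F hb).2 (i1 n p hb))
          (tmin n p hb)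
        else (gswap n p σ F hb).2 i) = F
    funext i
    have e1 : (gswap n p σ F hb).2 (i1 n p hb) =
        glue (F (i0 n p hb)) (F (i1 n p hb)) (tmin n p hb) := by
      unfold gswap
      simp [if_neg hne]
    have e0 : (gswap n p σ F hb).2 (i0 n p hb) =
        glue (F (i1 n p hb)) (F (i0 n p hb)) (tmin n p hb) := by
      unfold gswap
      simp
    by_cases hi0 : i = i0 n p hb
    · subst hi0
      rw [if_pos rfl, e1, e0, glue_glue]
    · by_cases hi1 : i = i1 n p hb
      · subst hi1
        rw [if_neg hne, if_pos rfl, e1, e0, glue_glue]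
      · rw [if_neg hi0, if_neg hi1]
        unfold gswap
        simp only [if_neg hi0, if_neg hi1]

lemma gswap_sign {σ : Equiv.Perm (Fin n)} {F : Fin n → Finset ℕ} (hb : BadP n p σ F) :
    (Equiv.Perm.sign (gswap n p σ F hb).1 : ℤ) = - (Equiv.Perm.sign σ : ℤ) := by
  unfold gswap
  rw [Equiv.Perm.sign_mul, Equiv.Perm.sign_swap (i1_ne n p hb).symm]
  simp

lemma gswap_fst_ne {σ : Equiv.Perm (Fin n)} {F : Fin n → Finset ℕ} (hb : BadP n p σ F) :
    (gswap n p σ F hb).1 ≠ σ := by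
  intro h
  unfold gswap at h
  have : σ * Equiv.swap (i0 n p hb) (i1 n p hb) = σ * 1 := by rw [mul_one]; exact h
  have h2 := mul_left_cancel this
  have := Equiv.swap_apply_left (i0 n p hb) (i1 n p hb)
  rw [h2] at this
  simp only [Equiv.Perm.coe_one, id_eq] at this
  exact (i1_ne n p hb) this.symm

/-! ### permutations other than identity give only bad families -/

lemma cnt_zero (T : Finset ℕ) : cnt T 0 = 0 := by
  rw [cnt, Finset.card_eq_zero]
  apply Finset.filter_false_of_mem
  intro x _
  omega

lemma ht_step (σ : Equiv.Perm (Fin n)) (F : Fin n → Finset ℕ) (i : Fin n) (t : ℕ) :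
    Ht n σ F i (t+1) = Ht n σ F i t ∨ Ht n σ F i (t+1) = Ht n σ F i t + 1 := by
  unfold Ht
  rcases cnt_succ_or (F i) t with h | h <;> omega

lemma strictMono_gap {f : Fin n → ℕ} (hf : StrictMono f) :
    ∀ (d : ℕ) (i j : Fin n), ↑i + d = ↑j → f i + d ≤ f j := by
  intro d
  induction d with
  | zero =>
    intro i j h
    have : i = j := Fin.ext (by omega)
    subst this; omega
  | succ d ih =>
    intro i j h
    have hj : (↑i + d) < n := by have := j.isLt; omega
    have hij : (⟨↑i + d, hj⟩ : Fin n) < j := by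
      rw [Fin.lt_def]; simp; omega
    have h1 := ih i ⟨↑i + d, hj⟩ rfl
    have h2 := hf hij
    omega

lemma fin_le_strictMono {f : Fin n → Fin n} (hf : StrictMono f) :
    ∀ i : Fin n, (i : ℕ) ≤ ↑(f i) := by
  have key : ∀ (m : ℕ) (i : Fin n), ↑i = m → m ≤ ↑(f i) := by
    intro m
    induction m with
    | zero => intro i _; omega
    | succ m ih =>
      intro i hi
      have hm : m < n := by have := i.isLt; omega
      have hlt : (⟨m, hm⟩ : Fin n) < i := by rw [Fin.lt_def]; simp; omega
      have h1 := ih ⟨m, hm⟩ rfl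
      have h2 := hf hlt
      rw [Fin.lt_def] at h2
      omega
  intro i
  exact key ↑i i rfl

lemma exists_inversion {σ : Equiv.Perm (Fin n)} (h : σ ≠ 1) :
    ∃ i j : Fin n, i < j ∧ σ j < σ i := by
  by_contra hc
  push_neg at hc
  have hmono : StrictMono σ := by
    intro i j hij
    have h1 := hc i j hij
    have h2 : σ i ≠ σ j := fun he => absurd (σ.injective he) (ne_of_lt hij)
    exact lt_of_le_of_ne h1 h2
  have hmono' : StrictMono (σ⁻¹ : Equiv.Perm (Fin n)) := by
    intro x y hxy
    rcases lt_trichotomy ((σ⁻¹ : Equiv.Perm (Fin n)) x) ((σ⁻¹ : Equiv.Perm (Fin n)) y)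
      with h' | h' | h'
    · exact h'
    · exact absurd ((σ⁻¹).injective h') (ne_of_lt hxy)
    · have := hmono h'
      rw [show ∀ z : Fin n, σ (σ⁻¹ z) = z from fun z => σ.apply_symm_apply z,
        show ∀ z : Fin n, σ (σ⁻¹ z) = z from fun z => σ.apply_symm_apply z] at this
      exact absurd hxy (not_lt_of_gt this)
  apply h
  apply Equiv.ext
  intro i
  have h1 := fin_le_strictMono n hmono i
  have h2 := fin_le_strictMono n hmono' (σ i)
  rw [show σ⁻¹ (σ i) = i from σ.symm_apply_apply i] at h2
  simp only [Equiv.Perm.coe_one, id_eq]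
  exact Fin.ext (by omega)

lemma bad_of_ne_one (ha : StrictMono a) {σ : Equiv.Perm (Fin n)} (hσ : σ ≠ 1)
    {F : Fin n → Finset ℕ} (hF : F ∈ Fams n p a σ) : BadP n p σ F := by
  obtain ⟨i, j, hij, hinv⟩ := exists_inversion n hσ
  rw [mem_Fams] at hF
  have hi := hF i
  have hj := hF j
  have hval : (i : ℕ) < (j : ℕ) := hij
  have hfi : Ht n σ F i (p + ↑i) = a i := by
    unfold Ht
    rw [cnt_eq_card _ hi.1 (le_refl _)]
    omega
  have hfj : a i ≤ Ht n σ F j (p + ↑i) := by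
    have hcle := card_le_cnt_add (F j) hj.1 (p + ↑i)
    have hgap := strictMono_gap n ha ((j : ℕ) - ↑i) i j (by omega)
    unfold Ht
    omega
  have h0 : Ht n σ F j 0 ≤ Ht n σ F i 0 := by
    unfold Ht
    rw [cnt_zero, cnt_zero]
    have : (σ j : ℕ) < ↑(σ i) := hinv
    omega
  obtain ⟨t, ht, he⟩ := steps_ivt (Ht n σ F i) (Ht n σ F j)
    (ht_step n σ F i) (ht_step n σ F j) (p + ↑i) h0 (by omega)
  apply (badP_iff n p).mpr
  exact ⟨t, ⟨(i, j), ne_of_lt hij, ht, by show t ≤ p + ↑j; omega, he⟩⟩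

/-! ### summing over all families -/

def OmegaS : Finset ((Equiv.Perm (Fin n)) × (Fin n → Finset ℕ)) :=
  Finset.univ.biUnion (fun σ => (Fams n p a σ).image (fun F => (σ, F)))

lemma mem_OmegaS {z : (Equiv.Perm (Fin n)) × (Fin n → Finset ℕ)} :
    z ∈ OmegaS n p a ↔ z.2 ∈ Fams n p a z.1 := by
  unfold OmegaS
  rw [Finset.mem_biUnion]
  constructor
  · rintro ⟨σ, _, hz⟩
    rw [Finset.mem_image] at hz
    obtain ⟨F, hF, rfl⟩ := hz
    exact hF
  · intro h
    exact ⟨z.1, Finset.mem_univ _, Finset.mem_image.mpr ⟨z.2, h, rfl⟩⟩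

lemma sum_OmegaS (f : Equiv.Perm (Fin n) → (Fin n → Finset ℕ) → ℤ) :
    ∑ z ∈ OmegaS n p a, f z.1 z.2
      = ∑ σ : Equiv.Perm (Fin n), ∑ F ∈ Fams n p a σ, f σ F := by
  unfold OmegaS
  rw [Finset.sum_biUnion]
  · apply Finset.sum_congr rfl
    intro σ _
    rw [Finset.sum_image (fun x _ y _ h => congrArg Prod.snd h)]
  · intro x _ y _ hxy
    apply Finset.disjoint_left.mpr
    intro z hz hz'
    rw [Finset.mem_image] at hz hz'
    obtain ⟨F, _, rfl⟩ := hz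
    obtain ⟨F', _, he⟩ := hz'
    exact hxy ((congrArg Prod.fst he).symm)

/-- non-meeting families for the identity permutation -/
def Good : Finset (Fin n → Finset ℕ) :=
  (Fams n p a 1).filter (fun F => ¬ BadP n p 1 F)

theorem det_eq_good (ha : StrictMono a) :
    Matrix.det (Matrix.of fun i j : Fin n =>
        if (j : ℕ) + 1 ≤ a i then ((p + (i : ℕ)).choose (a i - ((j : ℕ) + 1)) : ℤ)
        else 0) = ((Good n p a).card : ℤ) := by
  rw [det_eq_sum_card]
  have e1 : ∀ σ : Equiv.Perm (Fin n), (Equiv.Perm.sign σ : ℤ) * ((Fams n p a σ).card : ℤ)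
      = ∑ _F ∈ Fams n p a σ, ((Equiv.Perm.sign σ : ℤ)) := by
    intro σ
    rw [Finset.sum_const, nsmul_eq_mul, mul_comm]
  rw [Finset.sum_congr rfl (fun σ _ => e1 σ),
    ← sum_OmegaS n p a (fun σ _ => (Equiv.Perm.sign σ : ℤ))]
  rw [← Finset.sum_filter_add_sum_filter_not (OmegaS n p a) (fun z => BadP n p z.1 z.2)]
  have hbad : ∑ z ∈ (OmegaS n p a).filter (fun z => BadP n p z.1 z.2),
      ((Equiv.Perm.sign z.1 : ℤ)) = 0 := by
    apply Finset.sum_involution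
      (g := fun z hz => gswap n p z.1 z.2 (Finset.mem_filter.mp hz).2)
    · intro z hz
      rw [gswap_sign]
      omega
    · intro z hz _
      intro he
      exact gswap_fst_ne n p (Finset.mem_filter.mp hz).2 (congrArg Prod.fst he)
    · intro z hz
      exact (gswap_gswap n p (Finset.mem_filter.mp hz).2 _).trans Prod.mk.eta
    · intro z hz
      rw [Finset.mem_filter]
      refine ⟨(mem_OmegaS n p a).mpr ?_, gswap_bad n p _⟩
      exact gswap_mem_Fams n p a ((mem_OmegaS n p a).mp (Finset.mem_filter.mp hz).1) _
  rw [hbad, zero_add]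
  have hone : ∀ z ∈ (OmegaS n p a).filter (fun z => ¬ BadP n p z.1 z.2),
      ((Equiv.Perm.sign z.1 : ℤ)) = 1 := by
    intro z hz
    rw [Finset.mem_filter] at hz
    have h1 : z.1 = 1 := by
      by_contra hne
      exact hz.2 (bad_of_ne_one n p a ha hne ((mem_OmegaS n p a).mp hz.1))
    rw [h1]
    simp
  rw [Finset.sum_congr rfl hone, Finset.sum_const, nsmul_eq_mul, mul_one]
  congr 1
  apply Finset.card_bij (fun z _ => z.2)
  · intro z hz
    rw [Finset.mem_filter] at hz
    have h1 : z.1 = 1 := by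
      by_contra hne
      exact hz.2 (bad_of_ne_one n p a ha hne ((mem_OmegaS n p a).mp hz.1))
    rw [Good, Finset.mem_filter]
    have := (mem_OmegaS n p a).mp hz.1
    rw [h1] at this hz
    exact ⟨this, hz.2⟩
  · intro z hz z' hz' he
    rw [Finset.mem_filter] at hz hz'
    have h1 : z.1 = 1 := by
      by_contra hne
      exact hz.2 (bad_of_ne_one n p a ha hne ((mem_OmegaS n p a).mp hz.1))
    have h1' : z'.1 = 1 := by
      by_contra hne
      exact hz'.2 (bad_of_ne_one n p a ha hne ((mem_OmegaS n p a).mp hz'.1))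
    exact Prod.ext (h1.trans h1'.symm) he
  · intro F hF
    rw [Good, Finset.mem_filter] at hF
    refine ⟨(1, F), ?_, rfl⟩
    rw [Finset.mem_filter]
    exact ⟨(mem_OmegaS n p a).mpr hF.1, hF.2⟩

end Families

/-- Totalization of a sequence `a : Fin n → ℕ` to `ℕ → ℕ` (value `0` out of range). -/
def extSeq (n : ℕ) (a : Fin n → ℕ) : ℕ → ℕ := fun m => if h : m < n then a ⟨m, h⟩ else 0

/-- The Young diagram `Y(a)` associated to a sequence `a₁ < ⋯ < aₙ`:
its `(n+1-i)`-th row from the top has `aᵢ - i` boxes. Rows and columns are 0-indexed. -/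
def cellsOf (n : ℕ) (a : Fin n → ℕ) : Finset (ℕ × ℕ) :=
  ((Finset.range n) ×ˢ (Finset.range (2 * n))).filter fun u =>
    u.2 < extSeq n a (n - 1 - u.1) - (n - u.1)

section Tableaux

variable (n p : ℕ) (a : Fin n → ℕ)

lemma extSeq_lt {k : ℕ} (hk : k < n) : extSeq n a k = a ⟨k, hk⟩ := dif_pos hk

lemma mem_cellsOf (h2 : ∀ i : Fin n, a i ≤ 2 * (i : ℕ) + 1) {x y : ℕ} :
    (x, y) ∈ cellsOf n a ↔ ∃ h : x < n, y + (n - x) < a ⟨n - 1 - x, by omega⟩ := by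
  rw [cellsOf, Finset.mem_filter, Finset.mem_product, Finset.mem_range, Finset.mem_range]
  constructor
  · rintro ⟨⟨hx, _⟩, hlt⟩
    refine ⟨hx, ?_⟩
    rw [extSeq_lt n a (show n - 1 - x < n by omega)] at hlt
    omega
  · rintro ⟨hx, hlt⟩
    have hk : n - 1 - x < n := by omega
    have hb := h2 ⟨n - 1 - x, hk⟩
    simp only at hb
    have hlt' : y + (n - x) < a ⟨n - 1 - x, hk⟩ := hlt
    refine ⟨⟨hx, by omega⟩, ?_⟩
    show y < extSeq n a (n - 1 - x) - (n - x)
    rw [extSeq_lt n a hk]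
    omega

lemma mem_cellsOf_row (h2 : ∀ i : Fin n, a i ≤ 2 * (i : ℕ) + 1) {y : ℕ} (i : Fin n) :
    (n - 1 - ↑i, y) ∈ cellsOf n a ↔ y + (↑i + 1) < a i := by
  have hi : (i : ℕ) < n := i.isLt
  rw [mem_cellsOf n a h2]
  constructor
  · rintro ⟨hx, hlt⟩
    have e1 : n - 1 - (n - 1 - (i : ℕ)) = ↑i := by omega
    have e2 : n - (n - 1 - (i : ℕ)) = ↑i + 1 := by omega
    rw [e2] at hlt
    have : (⟨n - 1 - (n - 1 - (i : ℕ)), by omega⟩ : Fin n) = i := Fin.ext (by simpa using e1)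
    rwa [this] at hlt
  · intro hlt
    refine ⟨by omega, ?_⟩
    have e1 : n - 1 - (n - 1 - (i : ℕ)) = ↑i := by omega
    have e2 : n - (n - 1 - (i : ℕ)) = ↑i + 1 := by omega
    rw [e2]
    have : (⟨n - 1 - (n - 1 - (i : ℕ)), by omega⟩ : Fin n) = i := Fin.ext (by simpa using e1)
    rw [this]
    exact hlt

lemma cell_x_lt {x y : ℕ} (h2 : ∀ i : Fin n, a i ≤ 2 * (i : ℕ) + 1)
    (h : (x, y) ∈ cellsOf n a) : x < n := by
  rw [mem_cellsOf n a h2] at h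
  exact h.1

/-- row of a family corresponding to `x`-coordinate, totalized -/
def Frow (F : Fin n → Finset ℕ) (k : ℕ) : Finset ℕ :=
  if h : k < n then F ⟨k, h⟩ else ∅

lemma Frow_lt (F : Fin n → Finset ℕ) {k : ℕ} (hk : k < n) :
    Frow n F k = F ⟨k, hk⟩ := dif_pos hk

/-- family → tableau -/
def Phi (F : Fin n → Finset ℕ) : ℕ × ℕ → ℕ := fun u =>
  if u ∈ cellsOf n a then
    ((Frow n F (n - 1 - u.1)).sort (· ≤ ·)).getD u.2 0 + (u.1 + 1)
  else 0

/-- tableau → family -/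
def Psi (f : ℕ × ℕ → ℕ) : Fin n → Finset ℕ := fun i =>
  (Finset.range (a i - ((i : ℕ) + 1))).image
    (fun y => f (n - 1 - ↑i, y) - (n - 1 - ↑i + 1))

lemma mem_Fams_one {F : Fin n → Finset ℕ} :
    F ∈ Fams n p a 1 ↔
      ∀ i, F i ⊆ Finset.range (p + ↑i) ∧ (F i).card + ((i : ℕ) + 1) = a i := by
  rw [mem_Fams]
  simp

lemma ht_one (F : Fin n → Finset ℕ) (i : Fin n) (t : ℕ) :
    Ht n 1 F i t = (i : ℕ) + 1 + cnt (F i) t := by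
  simp [Ht]

lemma not_bad_of_adj {F : Fin n → Finset ℕ}
    (hadj : ∀ (k : ℕ) (hk : k + 1 < n) (t : ℕ), t ≤ p + k →
      Ht n 1 F ⟨k, by omega⟩ t < Ht n 1 F ⟨k+1, hk⟩ t) :
    ¬ BadP n p 1 F := by
  have key : ∀ (d : ℕ) (i j : Fin n), ↑i + d + 1 = ↑j → ∀ t, t ≤ p + ↑i →
      Ht n 1 F i t < Ht n 1 F j t := by
    intro d
    induction d with
    | zero =>
      intro i j hij t ht
      have hk : (i : ℕ) + 1 < n := by have := j.isLt; omega
      have e1 : (⟨(i : ℕ), by omega⟩ : Fin n) = i := Fin.ext rfl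
      have e2 : (⟨(i : ℕ) + 1, hk⟩ : Fin n) = j := Fin.ext (by simpa using hij)
      have := hadj ↑i hk t ht
      rwa [e1, e2] at this
    | succ d ih =>
      intro i j hij t ht
      have hj' : (i : ℕ) + d + 1 < n := by have := j.isLt; omega
      have h1 := ih i ⟨↑i + d + 1, hj'⟩ (by simp) t ht
      have hk : (↑i + d + 1) + 1 < n := by have := j.isLt; omega
      have h2 := hadj (↑i + d + 1) hk t (by omega)
      have e2 : (⟨↑i + d + 1 + 1, hk⟩ : Fin n) = j :=
        Fin.ext (show (↑i + d + 1 + 1 : ℕ) = ↑j by omega)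
      rw [e2] at h2
      exact lt_trans h1 h2
  intro hb
  obtain ⟨t, q, hne, hb1, hb2, heq⟩ := hb
  rcases Fin.lt_or_lt_of_ne hne with h | h
  · have : (q.1 : ℕ) < ↑q.2 := h
    have := key (↑q.2 - ↑q.1 - 1) q.1 q.2 (by omega) ↑t hb1
    omega
  · have : (q.2 : ℕ) < ↑q.1 := h
    have := key (↑q.1 - ↑q.2 - 1) q.2 q.1 (by omega) ↑t hb2
    omega

lemma adj_of_good {F : Fin n → Finset ℕ} (hG : ¬ BadP n p 1 F)
    (k : ℕ) (hk : k + 1 < n) (t : ℕ) (ht : t ≤ p + k) :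
    Ht n 1 F ⟨k, by omega⟩ t < Ht n 1 F ⟨k+1, hk⟩ t := by
  apply steps_no_cross _ _ (ht_step n 1 F _) (ht_step n 1 F _) (p + k) _ _ t ht
  · simp [ht_one, cnt_zero]
  · intro s hs he
    apply hG
    apply (badP_iff n p).mpr
    refine ⟨s, ((⟨k, by omega⟩ : Fin n), (⟨k+1, hk⟩ : Fin n)), ?_, ?_, ?_, he⟩
    · simp [Fin.ext_iff]
    · show s ≤ p + k; omega
    · show s ≤ p + (k+1); omega

lemma cnt_adj_of_good {F : Fin n → Finset ℕ} (hG : ¬ BadP n p 1 F)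
    (k : ℕ) (hk : k + 1 < n) (t : ℕ) (ht : t ≤ p + k) :
    cnt (F ⟨k, by omega⟩) t ≤ cnt (F ⟨k+1, hk⟩) t := by
  have h := adj_of_good n p hG k hk t ht
  rw [ht_one, ht_one] at h
  have e1 : ((⟨k, by omega⟩ : Fin n) : ℕ) = k := rfl
  have e2 : ((⟨k+1, hk⟩ : Fin n) : ℕ) = k + 1 := rfl
  rw [e1, e2] at h
  omega

lemma card_row_mono (ha : StrictMono a) {i j : Fin n} (hij : (i:ℕ) ≤ (j:ℕ)) :
    a i - ((i:ℕ)+1) ≤ a j - ((j:ℕ)+1) := by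
  have := strictMono_gap n ha ((j:ℕ) - (i:ℕ)) i j (by omega)
  omega

lemma phi_bounds (h2 : ∀ i : Fin n, a i ≤ 2 * (i : ℕ) + 1)
    {F : Fin n → Finset ℕ} (hF : F ∈ Fams n p a 1) :
    ∀ u ∈ cellsOf n a, 1 ≤ Phi n a F u ∧ Phi n a F u ≤ p + n - 1 := by
  rintro ⟨x, y⟩ hu
  obtain ⟨hx, hlt⟩ := (mem_cellsOf n a h2).mp hu
  set i : Fin n := ⟨n - 1 - x, by omega⟩ with hi
  have hcard := ((mem_Fams_one n p a).mp hF i).2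
  have hsub := ((mem_Fams_one n p a).mp hF i).1
  have hiv : (i : ℕ) = n - 1 - x := rfl
  have hycard : y < (F i).card := by omega
  have hylen : y < ((F i).sort (· ≤ ·)).length := by
    rw [Finset.length_sort]; omega
  have hPhi : Phi n a F (x, y) = ((F i).sort (· ≤ ·))[y] + (x + 1) := by
    rw [Phi, if_pos hu]
    simp only
    rw [Frow_lt n F (show n - 1 - x < n by omega), List.getD_eq_getElem _ _ hylen]
  have hmem : ((F i).sort (· ≤ ·))[y] ∈ F i :=
    (Finset.mem_sort (· ≤ ·)).mp (List.getElem_mem hylen)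
  have hrange := hsub hmem
  rw [Finset.mem_range] at hrange
  rw [hPhi]
  constructor
  · omega
  · omega

lemma phi_row (h2 : ∀ i : Fin n, a i ≤ 2 * (i : ℕ) + 1)
    {F : Fin n → Finset ℕ} (hF : F ∈ Fams n p a 1) :
    ∀ x y, (x, y) ∈ cellsOf n a → (x, y + 1) ∈ cellsOf n a →
      Phi n a F (x, y) < Phi n a F (x, y + 1) := by
  intro x y hu hu'
  obtain ⟨hx, hlt⟩ := (mem_cellsOf n a h2).mp hu
  obtain ⟨_, hlt'⟩ := (mem_cellsOf n a h2).mp hu'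
  set i : Fin n := ⟨n - 1 - x, by omega⟩ with hi
  have hcard := ((mem_Fams_one n p a).mp hF i).2
  have hiv : (i : ℕ) = n - 1 - x := rfl
  have hylen' : y + 1 < ((F i).sort (· ≤ ·)).length := by
    rw [Finset.length_sort]; omega
  have hylen : y < ((F i).sort (· ≤ ·)).length := by omega
  have hPhi : Phi n a F (x, y) = ((F i).sort (· ≤ ·))[y] + (x + 1) := by
    rw [Phi, if_pos hu]
    simp only
    rw [Frow_lt n F (show n - 1 - x < n by omega), List.getD_eq_getElem _ _ hylen]
  have hPhi' : Phi n a F (x, y+1) = ((F i).sort (· ≤ ·))[y+1] + (x + 1) := by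
    rw [Phi, if_pos hu']
    simp only
    rw [Frow_lt n F (show n - 1 - x < n by omega), List.getD_eq_getElem _ _ hylen']
  have hsorted := List.sortedLT_iff_pairwise.mp (F i).sortedLT_sort
  rw [List.pairwise_iff_getElem] at hsorted
  have := hsorted y (y+1) hylen hylen' (by omega)
  omega

lemma phi_col (ha : StrictMono a) (h2 : ∀ i : Fin n, a i ≤ 2 * (i : ℕ) + 1)
    {F : Fin n → Finset ℕ} (hF : F ∈ Fams n p a 1) (hG : ¬ BadP n p 1 F) :
    ∀ x y, (x, y) ∈ cellsOf n a → (x + 1, y) ∈ cellsOf n a →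
      Phi n a F (x, y) < Phi n a F (x + 1, y) := by
  intro x y hu hu'
  obtain ⟨hx, hlt⟩ := (mem_cellsOf n a h2).mp hu
  obtain ⟨hx', hlt'⟩ := (mem_cellsOf n a h2).mp hu'
  -- lower row (x+1) has index k, upper row (x) has index k+1
  set k : ℕ := n - 1 - (x + 1) with hkdef
  have hk : k + 1 < n := by omega
  set i : Fin n := ⟨k, by omega⟩ with hi
  set i' : Fin n := ⟨k + 1, hk⟩ with hi'
  have hiv : (i : ℕ) = k := rfl
  have hiv' : (i' : ℕ) = k + 1 := rfl
  have e1 : n - 1 - (x + 1) = k := rfl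
  have e2 : n - 1 - x = k + 1 := by omega
  have hcard := ((mem_Fams_one n p a).mp hF i).2
  have hcard' := ((mem_Fams_one n p a).mp hF i').2
  have hsub := ((mem_Fams_one n p a).mp hF i).1
  -- the cell (x+1, y) gives y < card (F i)
  have hycard : y < (F i).card := by omega
  have hycard' : y < (F i').card := by
    have := card_row_mono n a ha (i := i) (j := i') (by omega)
    omega
  have hylen : y < ((F i).sort (· ≤ ·)).length := by rw [Finset.length_sort]; omega
  have hylen' : y < ((F i').sort (· ≤ ·)).length := by rw [Finset.length_sort]; omega
  have hPhi : Phi n a F (x, y) = ((F i').sort (· ≤ ·))[y] + (x + 1) := by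
    rw [Phi, if_pos hu]
    simp only
    rw [e2, Frow_lt n F hk, List.getD_eq_getElem _ _ hylen']
  have hPhi' : Phi n a F (x+1, y) = ((F i).sort (· ≤ ·))[y] + (x + 2) := by
    rw [Phi, if_pos hu']
    simp only
    rw [e1, Frow_lt n F (show k < n by omega), List.getD_eq_getElem _ _ hylen]
  set e : ℕ := ((F i).sort (· ≤ ·))[y] with hedef
  have hmem : e ∈ F i := (Finset.mem_sort (· ≤ ·)).mp (List.getElem_mem hylen)
  have hrange := hsub hmem
  rw [Finset.mem_range] at hrange
  have hcnt1 : y + 1 ≤ cnt (F i) (e + 1) :=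
    (cnt_lt_iff (F i) hylen (e+1)).mp (by omega)
  have hcnt2 : cnt (F i) (e+1) ≤ cnt (F i') (e+1) := by
    have := cnt_adj_of_good n p hG k hk (e+1) (by omega)
    exact this
  have hfinal : ((F i').sort (· ≤ ·))[y] < e + 1 :=
    (cnt_lt_iff (F i') hylen' (e+1)).mpr (by omega)
  rw [hPhi, hPhi']
  omega

lemma a_ge (ha : StrictMono a) (h1 : ∀ i, 1 ≤ a i) (i : Fin n) : (i : ℕ) + 1 ≤ a i := by
  have hpos : 0 < n := i.pos
  have := strictMono_gap n ha (i : ℕ) ⟨0, hpos⟩ i (by simp)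
  have := h1 ⟨0, hpos⟩
  omega

section TabHyps

variable (h2 : ∀ i : Fin n, a i ≤ 2 * (i : ℕ) + 1) (ha : StrictMono a)
variable {f : ℕ × ℕ → ℕ}
variable (hfb : ∀ u ∈ cellsOf n a, 1 ≤ f u ∧ f u ≤ p + n - 1)
variable (hfr : ∀ x y, (x, y) ∈ cellsOf n a → (x, y + 1) ∈ cellsOf n a →
  f (x, y) < f (x, y + 1))
variable (hfc : ∀ x y, (x, y) ∈ cellsOf n a → (x + 1, y) ∈ cellsOf n a →
  f (x, y) < f (x + 1, y))

include h2 hfb hfc ha in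
lemma f_ge : ∀ x y, (x, y) ∈ cellsOf n a → x + 1 ≤ f (x, y) := by
  intro x
  induction x with
  | zero =>
    intro y hu
    exact (hfb _ hu).1
  | succ x ih =>
    intro y hu
    obtain ⟨hx, hlt⟩ := (mem_cellsOf n a h2).mp hu
    have hk : n - 1 - (x + 1) < n := by omega
    have hk1 : n - 1 - x < n := by omega
    have hmono := ha (show (⟨n - 1 - (x+1), hk⟩ : Fin n) < ⟨n - 1 - x, hk1⟩ by
      rw [Fin.lt_def]; show n - 1 - (x+1) < n - 1 - x; omega)
    have hcell : (x, y) ∈ cellsOf n a := by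
      rw [mem_cellsOf n a h2]
      refine ⟨by omega, ?_⟩
      have h1' : y + (n - (x+1)) < a ⟨n - 1 - (x+1), hk⟩ := hlt
      omega
    have := hfc x y hcell hu
    have := ih y hcell
    omega

include h2 hfr in
lemma row_mono : ∀ z y x, y < z → (x, z) ∈ cellsOf n a → f (x, y) < f (x, z) := by
  intro z
  induction z with
  | zero => intro y x hy; omega
  | succ z ih =>
    intro y x hy hu
    obtain ⟨hx, hlt⟩ := (mem_cellsOf n a h2).mp hu
    have hcell : (x, z) ∈ cellsOf n a := by
      rw [mem_cellsOf n a h2]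
      exact ⟨hx, by omega⟩
    have hstep := hfr x z hcell hu
    rcases Nat.lt_or_ge y z with h | h
    · exact lt_trans (ih y x h hcell) hstep
    · have : y = z := by omega
      subst this
      exact hstep

/-- the entries of row `i`, shifted -/
def gRow (f : ℕ × ℕ → ℕ) (i : Fin n) (y : ℕ) : ℕ := f (n - 1 - ↑i, y) - (n - 1 - ↑i + 1)

include h2 ha hfb hfr hfc in
lemma gRow_strict (i : Fin n) : ∀ {y z : ℕ}, y < z → z < a i - ((i:ℕ)+1) →
    gRow n f i y < gRow n f i z := by
  intro y z hyz hz
  have hcz : (n - 1 - ↑i, z) ∈ cellsOf n a := by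
    rw [mem_cellsOf_row n a h2]
    omega
  have hcy : (n - 1 - ↑i, y) ∈ cellsOf n a := by
    rw [mem_cellsOf_row n a h2]
    omega
  have h1 := row_mono n a h2 hfr z y (n - 1 - ↑i) hyz hcz
  have h3 := f_ge n p a h2 ha hfb hfc (n - 1 - ↑i) y hcy
  unfold gRow
  omega

include h2 ha hfb hfr hfc in
lemma psi_mem_fams (h1 : ∀ i, 1 ≤ a i) : Psi n a f ∈ Fams n p a 1 := by
  rw [mem_Fams_one]
  intro i
  have hage := a_ge n a ha h1 i
  have hiv : (i : ℕ) < n := i.isLt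
  constructor
  · intro w hw
    rw [Psi, Finset.mem_image] at hw
    obtain ⟨y, hy, rfl⟩ := hw
    rw [Finset.mem_range] at hy
    have hcy : (n - 1 - ↑i, y) ∈ cellsOf n a := by
      rw [mem_cellsOf_row n a h2]; omega
    have hb := hfb _ hcy
    have hg := f_ge n p a h2 ha hfb hfc (n - 1 - ↑i) y hcy
    rw [Finset.mem_range]
    omega
  · rw [Psi]
    rw [Finset.card_image_of_injOn]
    · rw [Finset.card_range]; omega
    · intro y hy z hz he
      rw [Finset.mem_coe, Finset.mem_range] at hy hz
      have he' : f (n - 1 - ↑i, y) - (n - 1 - ↑i + 1)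
          = f (n - 1 - ↑i, z) - (n - 1 - ↑i + 1) := he
      by_contra hne
      rcases Nat.lt_or_ge y z with h | h
      · have hlt := gRow_strict n p a h2 ha hfb hfr hfc i h hz
        have hlt' : f (n - 1 - ↑i, y) - (n - 1 - ↑i + 1)
            < f (n - 1 - ↑i, z) - (n - 1 - ↑i + 1) := hlt
        omega
      · have hzy : z < y := by omega
        have hlt := gRow_strict n p a h2 ha hfb hfr hfc i hzy hy
        have hlt' : f (n - 1 - ↑i, z) - (n - 1 - ↑i + 1)
            < f (n - 1 - ↑i, y) - (n - 1 - ↑i + 1) := hlt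
        omega

include h2 ha hfb hfr hfc in
lemma psi_sort (i : Fin n) :
    ((Psi n a f i).sort (· ≤ ·)) = (List.range (a i - ((i:ℕ)+1))).map (gRow n f i) := by
  rw [Psi]
  exact sort_image (fun hyz hz => gRow_strict n p a h2 ha hfb hfr hfc i hyz hz)

include h2 ha hfb hfr hfc in
lemma psi_not_bad (h1 : ∀ i, 1 ≤ a i) : ¬ BadP n p 1 (Psi n a f) := by
  apply not_bad_of_adj
  intro k hk t _
  set i : Fin n := ⟨k, by omega⟩ with hidef
  set i' : Fin n := ⟨k+1, hk⟩ with hidef'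
  have hiv : (i : ℕ) = k := rfl
  have hiv' : (i' : ℕ) = k + 1 := rfl
  have hmem := psi_mem_fams n p a h2 ha hfb hfr hfc h1
  have hcard := ((mem_Fams_one n p a).mp hmem i).2
  have hcard' := ((mem_Fams_one n p a).mp hmem i').2
  have hage := a_ge n a ha h1 i
  have hage' := a_ge n a ha h1 i'
  rw [ht_one, ht_one, hiv, hiv']
  have hsuff : cnt (Psi n a f i) t ≤ cnt (Psi n a f i') t := by
    set c := cnt (Psi n a f i) t with hcdef
    rcases Nat.eq_zero_or_pos c with hc | hc
    · omega
    · set y := c - 1 with hydef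
      have hylt : y < (Psi n a f i).card := by
        have := cnt_le_card (Psi n a f i) t
        omega
      have hylen : y < ((Psi n a f i).sort (· ≤ ·)).length := by
        rw [Finset.length_sort]; omega
      have hsort := psi_sort n p a h2 ha hfb hfr hfc i
      have hst : ((Psi n a f i).sort (· ≤ ·))[y] < t :=
        (cnt_lt_iff (Psi n a f i) hylen t).mpr (by omega)
      have hylen2 : y < (List.range (a i - ((i:ℕ)+1))).length := by
        rw [List.length_range]; omega
      have hgval : ((Psi n a f i).sort (· ≤ ·))[y]
          = gRow n f i y := by
        have := List.getElem_of_eq hsort hylen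
        rw [this, List.getElem_map, List.getElem_range]
      -- column comparison
      have hcelllow : (n - 1 - ↑i, y) ∈ cellsOf n a := by
        rw [mem_cellsOf_row n a h2]
        omega
      have hmlt : a i - ((i:ℕ)+1) ≤ a i' - ((i':ℕ)+1) :=
        card_row_mono n a ha (by omega)
      have hcellup : (n - 1 - ↑i', y) ∈ cellsOf n a := by
        rw [mem_cellsOf_row n a h2]
        omega
      have hx : n - 1 - (i':ℕ) + 1 = n - 1 - (i:ℕ) := by omega
      have hcol := hfc (n - 1 - ↑i') y hcellup (by rw [hx]; exact hcelllow)
      rw [hx] at hcol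
      have hge := f_ge n p a h2 ha hfb hfc (n - 1 - ↑i') y hcellup
      have hgle : gRow n f i' y ≤ gRow n f i y := by
        unfold gRow
        omega
      have hylt' : y < (Psi n a f i').card := by omega
      have hylen' : y < ((Psi n a f i').sort (· ≤ ·)).length := by
        rw [Finset.length_sort]; omega
      have hsort' := psi_sort n p a h2 ha hfb hfr hfc i'
      have hylen2' : y < (List.range (a i' - ((i':ℕ)+1))).length := by
        rw [List.length_range]; omega
      have hgval' : ((Psi n a f i').sort (· ≤ ·))[y] = gRow n f i' y := by
        have := List.getElem_of_eq hsort' hylen'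
        rw [this, List.getElem_map, List.getElem_range]
      have : y + 1 ≤ cnt (Psi n a f i') t := by
        apply (cnt_lt_iff (Psi n a f i') hylen' t).mp
        omega
      omega
  omega

end TabHyps

lemma psi_phi (h2 : ∀ i : Fin n, a i ≤ 2 * (i : ℕ) + 1) {F : Fin n → Finset ℕ}
    (hF : F ∈ Fams n p a 1) : Psi n a (Phi n a F) = F := by
  funext i
  have hiv : (i : ℕ) < n := i.isLt
  have hcard := ((mem_Fams_one n p a).mp hF i).2
  rw [Psi]
  have himg : ∀ y ∈ Finset.range (a i - ((i:ℕ)+1)),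
      Phi n a F (n - 1 - ↑i, y) - (n - 1 - ↑i + 1)
        = ((F i).sort (· ≤ ·)).getD y 0 := by
    intro y hy
    rw [Finset.mem_range] at hy
    have hcell : (n - 1 - ↑i, y) ∈ cellsOf n a := by
      rw [mem_cellsOf_row n a h2]; omega
    rw [Phi, if_pos hcell]
    simp only
    have e : n - 1 - (n - 1 - (i:ℕ)) = ↑i := by omega
    rw [e, Frow_lt n F hiv]
    have : (⟨(i:ℕ), hiv⟩ : Fin n) = i := Fin.ext rfl
    rw [this]
    omega
  rw [Finset.image_congr himg]
  exact image_getD (F i) (by omega)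

lemma phi_psi (h2 : ∀ i : Fin n, a i ≤ 2 * (i : ℕ) + 1) (ha : StrictMono a)
    {f : ℕ × ℕ → ℕ}
    (hf0 : ∀ u ∉ cellsOf n a, f u = 0)
    (hfb : ∀ u ∈ cellsOf n a, 1 ≤ f u ∧ f u ≤ p + n - 1)
    (hfr : ∀ x y, (x, y) ∈ cellsOf n a → (x, y + 1) ∈ cellsOf n a →
      f (x, y) < f (x, y + 1))
    (hfc : ∀ x y, (x, y) ∈ cellsOf n a → (x + 1, y) ∈ cellsOf n a →
      f (x, y) < f (x + 1, y)) :
    Phi n a (Psi n a f) = f := by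
  funext u
  rcases u with ⟨x, y⟩
  by_cases hu : (x, y) ∈ cellsOf n a
  · obtain ⟨hx, _⟩ := (mem_cellsOf n a h2).mp hu
    set i : Fin n := ⟨n - 1 - x, by omega⟩ with hidef
    have hiv : (i : ℕ) = n - 1 - x := rfl
    have e : n - 1 - (i : ℕ) = x := by omega
    have hcell : (n - 1 - ↑i, y) ∈ cellsOf n a := by rw [e]; exact hu
    have hym := (mem_cellsOf_row n a h2 (y := y) i).mp hcell
    have hylen2 : y < (List.range (a i - ((i:ℕ)+1))).length := by
      rw [List.length_range]; omega
    have hsort := psi_sort n p a h2 ha hfb hfr hfc i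
    have hylen : y < ((Psi n a f i).sort (· ≤ ·)).length := by
      rw [hsort, List.length_map]; exact hylen2
    rw [Phi, if_pos hu]
    simp only
    rw [Frow_lt n (Psi n a f) (show n - 1 - x < n by omega)]
    have hieq : (⟨n - 1 - x, by omega⟩ : Fin n) = i := rfl
    rw [hieq, List.getD_eq_getElem _ _ hylen]
    have hgval : ((Psi n a f i).sort (· ≤ ·))[y] = gRow n f i y := by
      have := List.getElem_of_eq hsort hylen
      rw [this, List.getElem_map, List.getElem_range]
    rw [hgval]
    unfold gRow
    rw [e]
    have hge := f_ge n p a h2 ha hfb hfc x y hu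
    omega
  · rw [Phi, if_neg hu]
    exact (hf0 _ hu).symm

lemma good_nonempty (ha : StrictMono a) (h1 : ∀ i, 1 ≤ a i)
    (h2 : ∀ i : Fin n, a i ≤ 2 * (i : ℕ) + 1) : (Good n p a).Nonempty := by
  set f0 : ℕ × ℕ → ℕ := fun u => if u ∈ cellsOf n a then u.1 + u.2 + 1 else 0 with hf0def
  have hfb : ∀ u ∈ cellsOf n a, 1 ≤ f0 u ∧ f0 u ≤ p + n - 1 := by
    rintro ⟨x, y⟩ hu
    obtain ⟨hx, hlt⟩ := (mem_cellsOf n a h2).mp hu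
    have hb := h2 ⟨n - 1 - x, by omega⟩
    simp only at hb
    have hlt' : y + (n - x) < a ⟨n - 1 - x, by omega⟩ := hlt
    rw [hf0def]
    simp only [if_pos hu]
    omega
  have hfr : ∀ x y, (x, y) ∈ cellsOf n a → (x, y + 1) ∈ cellsOf n a →
      f0 (x, y) < f0 (x, y + 1) := by
    intro x y hu hu'
    rw [hf0def]
    simp only [if_pos hu, if_pos hu']
    omega
  have hfc : ∀ x y, (x, y) ∈ cellsOf n a → (x + 1, y) ∈ cellsOf n a →
      f0 (x, y) < f0 (x + 1, y) := by
    intro x y hu hu'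
    rw [hf0def]
    simp only [if_pos hu, if_pos hu']
    omega
  refine ⟨Psi n a f0, ?_⟩
  rw [Good, Finset.mem_filter]
  exact ⟨psi_mem_fams n p a h2 ha hfb hfr hfc h1,
    psi_not_bad n p a h2 ha hfb hfr hfc h1⟩

lemma nat_card_eq (ha : StrictMono a) (h1 : ∀ i, 1 ≤ a i)
    (h2 : ∀ i : Fin n, a i ≤ 2 * (i : ℕ) + 1) :
    Nat.card {f : ℕ × ℕ → ℕ //
        (∀ u, u ∉ cellsOf n a → f u = 0) ∧
        (∀ u ∈ cellsOf n a, 1 ≤ f u ∧ f u ≤ p + n - 1) ∧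
        (∀ x y, (x, y) ∈ cellsOf n a → (x, y + 1) ∈ cellsOf n a → f (x, y) < f (x, y + 1)) ∧
        (∀ x y, (x, y) ∈ cellsOf n a → (x + 1, y) ∈ cellsOf n a → f (x, y) < f (x + 1, y))}
      = (Good n p a).card := by
  rw [← Nat.card_eq_finsetCard]
  apply Nat.card_congr
  refine ⟨?_, ?_, ?_, ?_⟩
  · rintro ⟨f, hf0, hfb, hfr, hfc⟩
    refine ⟨Psi n a f, ?_⟩
    rw [Good, Finset.mem_filter]
    exact ⟨psi_mem_fams n p a h2 ha hfb hfr hfc h1,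
      psi_not_bad n p a h2 ha hfb hfr hfc h1⟩
  · rintro ⟨F, hF⟩
    rw [Good, Finset.mem_filter] at hF
    refine ⟨Phi n a F, ?_, ?_, ?_, ?_⟩
    · intro u hu; rw [Phi, if_neg hu]
    · exact phi_bounds n p a h2 hF.1
    · exact phi_row n p a h2 hF.1
    · exact phi_col n p a ha h2 hF.1 hF.2
  · rintro ⟨f, hf0, hfb, hfr, hfc⟩
    apply Subtype.ext
    exact phi_psi n p a h2 ha hf0 hfb hfr hfc
  · rintro ⟨F, hF⟩
    rw [Good, Finset.mem_filter] at hF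
    apply Subtype.ext
    exact psi_phi n p a h2 hF.1

end Tableaux

/-- For `a₁ < ⋯ < aₙ` positive with `aᵢ ≤ 2i-1` and `p ≥ 0`, the determinant
`det(binom(p+i-1, aᵢ-j))` equals the number of fillings of `Y(a)` with entries in
`{1, …, p+n-1}` strictly increasing along rows and columns, and is strictly positive. -/
theorem det_counts_strict_tableaux (n : ℕ) (a : Fin n → ℕ) (ha : StrictMono a)
    (h1 : ∀ i, 1 ≤ a i) (h2 : ∀ i : Fin n, a i ≤ 2 * (i : ℕ) + 1) (p : ℕ) :
    Matrix.det (Matrix.of fun i j : Fin n =>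
        if (j : ℕ) + 1 ≤ a i then ((p + (i : ℕ)).choose (a i - ((j : ℕ) + 1)) : ℤ)
        else 0) =
      (Nat.card {f : ℕ × ℕ → ℕ //
        (∀ u, u ∉ cellsOf n a → f u = 0) ∧
        (∀ u ∈ cellsOf n a, 1 ≤ f u ∧ f u ≤ p + n - 1) ∧
        (∀ x y, (x, y) ∈ cellsOf n a → (x, y + 1) ∈ cellsOf n a → f (x, y) < f (x, y + 1)) ∧
        (∀ x y, (x, y) ∈ cellsOf n a → (x + 1, y) ∈ cellsOf n a → f (x, y) < f (x + 1, y))} : ℤ) ∧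
    0 < Matrix.det (Matrix.of fun i j : Fin n =>
        if (j : ℕ) + 1 ≤ a i then ((p + (i : ℕ)).choose (a i - ((j : ℕ) + 1)) : ℤ)
        else 0) := by
  have hdet := det_eq_good n p a ha
  have hcard := nat_card_eq n p a ha h1 h2
  constructor
  · rw [hdet, hcard]
  · rw [hdet]
    have := Finset.card_pos.mpr (good_nonempty n p a ha h1 h2)
    exact_mod_cast this
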